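/- For k ≥ 2, the densities of the sets of γ-primitive elements converge uniformly in γ: for every ε > 0 there exists r(ε) such that for all r ≥ r(ε) and all 1 ≤ γ ≤ r, |ρ_r(P_{k,γ}) − 1/(γ^k ζ(k))| ≤ ε/γ^{k−1}. -/

import Mathlib

/-- Ball density of a set of integer `k`-tuples at radius `r` (sup-norm ball). -/
noncomputable def rhoZ (k : ℕ) (S : Set (Fin k → ℤ)) (r : ℕ) : ℝ :=
  (Nat.card {v : Fin k → ℤ // (∀ i, |v i| ≤ (r : ℤ)) ∧ v ∈ S} : ℝ) / (2 * r + 1) ^ k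

/-- The Riemann zeta function at a natural number `s` (as a real series). -/
noncomputable def zetaR (s : ℕ) : ℝ := ∑' n : ℕ, 1 / ((n : ℝ) + 1) ^ s

open Finset Filter Topology
open scoped ArithmeticFunction.Moebius ArithmeticFunction.zeta


/-- The box of radius `r`. -/
noncomputable def boxZ (k r : ℕ) : Finset (Fin k → ℤ) := Fintype.piFinset fun _ => Finset.Icc (-(r:ℤ)) r

lemma mem_boxZ {k r : ℕ} {v : Fin k → ℤ} : v ∈ boxZ k r ↔ ∀ i, |v i| ≤ (r : ℤ) := by
  simp [boxZ, Fintype.mem_piFinset, abs_le, and_comm]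

lemma card_boxZ (k r : ℕ) : (boxZ k r).card = (2*r+1)^k := by
  simp only [boxZ, Fintype.card_piFinset]
  rw [Finset.prod_const, Int.card_Icc]
  rw [Finset.card_univ, Fintype.card_fin]
  congr 1
  omega

lemma zero_mem_boxZ (k r : ℕ) : (0 : Fin k → ℤ) ∈ boxZ k r := by
  simp [mem_boxZ]

-- exact division membership characterization
lemma abs_le_div_iff {r d : ℕ} (hd : 0 < d) {c : ℤ} :
    |(d:ℤ) * c| ≤ (r:ℤ) ↔ |c| ≤ ((r/d : ℕ) : ℤ) := by
  rw [abs_mul, abs_of_nonneg (by positivity : (0:ℤ) ≤ (d:ℤ)), Int.natCast_div]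
  rw [Int.le_ediv_iff_mul_le (by exact_mod_cast hd)]
  constructor
  · intro h; linarith [h, mul_comm (|c|) (d:ℤ)]
  · intro h; linarith [h, mul_comm (|c|) (d:ℤ)]

lemma filter_dvd_eq_image {k r d : ℕ} (hd : 0 < d) :
    (boxZ k r).filter (fun v => ∀ i, (d:ℤ) ∣ v i) =
      (boxZ k (r/d)).image (fun w i => (d:ℤ) * w i) := by
  ext v
  simp only [mem_filter, Finset.mem_image, mem_boxZ]
  constructor
  · rintro ⟨hv, hdvd⟩
    refine ⟨fun i => v i / d, fun i => ?_, funext fun i => Int.mul_ediv_cancel' (hdvd i)⟩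
    rw [← abs_le_div_iff hd, Int.mul_ediv_cancel' (hdvd i)]
    exact hv i
  · rintro ⟨w, hw, rfl⟩
    exact ⟨fun i => (abs_le_div_iff hd).2 (hw i), fun i => ⟨w i, rfl⟩⟩

lemma smul_injective {k : ℕ} {d : ℕ} (hd : 0 < d) :
    Function.Injective (fun (w : Fin k → ℤ) i => (d:ℤ) * w i) := by
  intro a b hab
  funext i
  exact mul_left_cancel₀ (by exact_mod_cast hd.ne' : (d:ℤ) ≠ 0) (congrFun hab i)

lemma card_filter_dvd (k r : ℕ) {d : ℕ} (hd : 0 < d) :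
    ((boxZ k r).filter (fun v => ∀ i, (d:ℤ) ∣ v i)).card = (2*(r/d)+1)^k := by
  rw [filter_dvd_eq_image hd, Finset.card_image_of_injective _ (smul_injective hd), card_boxZ]

lemma gcd_smul {k : ℕ} (γ : ℕ) (w : Fin k → ℤ) :
    Finset.univ.gcd (fun i => (γ:ℤ) * w i) = (γ:ℤ) * Finset.univ.gcd w := by
  rw [Finset.gcd_mul_left]
  congr 1
  exact Int.normalize_of_nonneg (by positivity)

lemma filter_gcd_eq_image {k r γ : ℕ} (hγ : 0 < γ) :
    (boxZ k r).filter (fun v => Finset.univ.gcd v = (γ:ℤ)) =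
      ((boxZ k (r/γ)).filter (fun w => Finset.univ.gcd w = 1)).image
        (fun w i => (γ:ℤ) * w i) := by
  have hγZ : (γ:ℤ) ≠ 0 := by exact_mod_cast hγ.ne'
  ext v
  simp only [mem_filter, Finset.mem_image, mem_boxZ]
  constructor
  · rintro ⟨hv, hgcd⟩
    have hdvd : ∀ i, (γ:ℤ) ∣ v i := fun i => hgcd ▸ Finset.gcd_dvd (Finset.mem_univ i)
    have hrepr : (fun i => (γ:ℤ) * (v i / γ)) = v :=
      funext fun i => Int.mul_ediv_cancel' (hdvd i)
    refine ⟨fun i => v i / γ, ⟨fun i => ?_, ?_⟩, hrepr⟩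
    · rw [← abs_le_div_iff hγ, Int.mul_ediv_cancel' (hdvd i)]; exact hv i
    · have h2 : (γ:ℤ) * Finset.univ.gcd (fun i => v i / γ) = (γ:ℤ) * 1 := by
        rw [← gcd_smul, hrepr, hgcd, mul_one]
      exact mul_left_cancel₀ hγZ h2
  · rintro ⟨w, ⟨hw, hw1⟩, rfl⟩
    refine ⟨fun i => (abs_le_div_iff hγ).2 (hw i), ?_⟩
    rw [gcd_smul, hw1, mul_one]

lemma natCard_eq_filter (k r : ℕ) (S : Set (Fin k → ℤ)) [DecidablePred (· ∈ S)] :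
    Nat.card {v : Fin k → ℤ // (∀ i, |v i| ≤ (r : ℤ)) ∧ v ∈ S} =
      ((boxZ k r).filter (· ∈ S)).card := by
  rw [← Nat.card_eq_finsetCard]
  exact Nat.card_congr (Equiv.subtypeEquivRight (by intro v; simp [mem_boxZ]))

open ArithmeticFunction in
lemma sum_moebius_divisors (n : ℕ) :
    ∑ d ∈ n.divisors, μ d = if n = 1 then 1 else 0 := by
  have h := congrArg (fun f : ArithmeticFunction ℤ => f n) moebius_mul_coe_zeta
  simp only [coe_mul_zeta_apply, one_apply] at h
  exact h

open ArithmeticFunction in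
lemma moebius_count (k r : ℕ) :
    (((boxZ k r).filter (fun v => Finset.univ.gcd v = (1:ℤ))).card : ℤ) =
      ∑ d ∈ Finset.Icc 1 r, μ d * ((2*((r:ℕ)/d)+1)^k - 1) := by
  classical
  set B' : Finset (Fin k → ℤ) := (boxZ k r).erase 0 with hB'
  have h0 : (boxZ k r).filter (fun v => Finset.univ.gcd v = (1:ℤ)) =
      B'.filter (fun v => Finset.univ.gcd v = (1:ℤ)) := by
    rw [hB', Finset.filter_erase]
    refine (Finset.erase_eq_of_notMem ?_).symm
    simp only [mem_filter, not_and]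
    intro _
    have hz : Finset.univ.gcd (0 : Fin k → ℤ) = 0 :=
      Finset.gcd_eq_zero_iff.2 (fun i _ => rfl)
    rw [hz]
    exact zero_ne_one
  -- per-element identity
  have key : ∀ v ∈ B', (if Finset.univ.gcd v = (1:ℤ) then (1:ℤ) else 0) =
      ∑ d ∈ Finset.Icc 1 r, (if (d:ℤ) ∣ Finset.univ.gcd v then μ d else 0) := by
    intro v hv
    obtain ⟨hvB, hv0⟩ : v ∈ boxZ k r ∧ v ≠ 0 := by
      rw [hB', Finset.mem_erase] at hv; exact ⟨hv.2, hv.1⟩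
    set g : ℕ := (Finset.univ.gcd v).toNat with hg
    have hgnn : (0:ℤ) ≤ Finset.univ.gcd v := by
      rw [← Finset.normalize_gcd, ← Int.abs_eq_normalize]
      exact abs_nonneg _
    have hgcast : Finset.univ.gcd v = (g:ℤ) := (Int.toNat_of_nonneg hgnn).symm
    have hgne : g ≠ 0 := by
      intro h
      apply hv0
      have : Finset.univ.gcd v = 0 := by rw [hgcast, h, Nat.cast_zero]
      rw [Finset.gcd_eq_zero_iff] at this
      funext i; exact this i (Finset.mem_univ i)
    have hgler : g ≤ r := by
      obtain ⟨i, hi⟩ : ∃ i, v i ≠ 0 := by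
        by_contra h
        push_neg at h
        exact hv0 (funext h)
      have := Int.le_of_dvd (abs_pos.mpr hi) ((dvd_abs _ _).mpr (hgcast ▸ Finset.gcd_dvd (Finset.mem_univ i)))
      have hvr := mem_boxZ.1 hvB i
      exact_mod_cast this.trans hvr
    have hdivisors : g.divisors = (Finset.Icc 1 r).filter (· ∣ g) := by
      ext d
      simp only [Nat.mem_divisors, mem_filter, Finset.mem_Icc]
      constructor
      · rintro ⟨hd, -⟩
        exact ⟨⟨Nat.pos_of_dvd_of_pos hd (Nat.pos_of_ne_zero hgne),
          (Nat.le_of_dvd (Nat.pos_of_ne_zero hgne) hd).trans hgler⟩, hd⟩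
      · rintro ⟨-, hd⟩
        exact ⟨hd, hgne⟩
    have hdvd_iff : ∀ d : ℕ, ((d:ℤ) ∣ Finset.univ.gcd v ↔ d ∣ g) := by
      intro d
      rw [hgcast, Int.natCast_dvd_natCast]
    have hone : (Finset.univ.gcd v = (1:ℤ)) ↔ g = 1 := by
      rw [hgcast]; exact_mod_cast Iff.rfl
    calc (if Finset.univ.gcd v = (1:ℤ) then (1:ℤ) else 0)
        = if g = 1 then 1 else 0 := by simp [hone]
      _ = ∑ d ∈ g.divisors, μ d := (sum_moebius_divisors g).symm
      _ = ∑ d ∈ (Finset.Icc 1 r).filter (· ∣ g), μ d := by rw [hdivisors]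
      _ = ∑ d ∈ Finset.Icc 1 r, (if d ∣ g then μ d else 0) := by rw [Finset.sum_filter]
      _ = ∑ d ∈ Finset.Icc 1 r, (if (d:ℤ) ∣ Finset.univ.gcd v then μ d else 0) := by
          refine Finset.sum_congr rfl fun d _ => ?_
          simp [hdvd_iff d]
  calc (((boxZ k r).filter (fun v => Finset.univ.gcd v = (1:ℤ))).card : ℤ)
      = ∑ v ∈ B', (if Finset.univ.gcd v = (1:ℤ) then (1:ℤ) else 0) := by
        rw [h0, Finset.card_filter]
        push_cast
        rfl
    _ = ∑ v ∈ B', ∑ d ∈ Finset.Icc 1 r, (if (d:ℤ) ∣ Finset.univ.gcd v then μ d else 0) :=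
        Finset.sum_congr rfl key
    _ = ∑ d ∈ Finset.Icc 1 r, ∑ v ∈ B', (if (d:ℤ) ∣ Finset.univ.gcd v then μ d else 0) :=
        Finset.sum_comm
    _ = ∑ d ∈ Finset.Icc 1 r, μ d * ((2*((r:ℕ)/d)+1)^k - 1) := by
        refine Finset.sum_congr rfl fun d hd => ?_
        rw [Finset.mem_Icc] at hd
        have hdpos : 0 < d := hd.1
        rw [← Finset.sum_filter, Finset.sum_const, nsmul_eq_mul, mul_comm]
        congr 1
        have hfe : B'.filter (fun v => (d:ℤ) ∣ Finset.univ.gcd v) =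
            ((boxZ k r).filter (fun v => ∀ i, (d:ℤ) ∣ v i)).erase 0 := by
          rw [hB', Finset.filter_erase]
          congr 1
          apply Finset.filter_congr
          intro v _
          rw [Finset.dvd_gcd_iff]
          simp
        have h0mem : (0 : Fin k → ℤ) ∈ (boxZ k r).filter (fun v => ∀ i, (d:ℤ) ∣ v i) := by
          simp [zero_mem_boxZ]
        have h1 : 1 ≤ (2*(r/d)+1)^k := Nat.one_le_pow _ _ (by omega)
        rw [hfe, Finset.card_erase_of_mem h0mem, card_filter_dvd k r hdpos]
        push_cast [Nat.cast_sub h1]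
        ring

open Filter Topology

lemma tendsto_two_mul_add_one : Tendsto (fun r : ℕ => 2*(r:ℝ)+1) atTop atTop := by
  apply Filter.tendsto_atTop_add_const_right
  exact Tendsto.const_mul_atTop two_pos tendsto_natCast_atTop_atTop

lemma ratio_lim (c : ℝ) : Tendsto (fun r : ℕ => ((2*(r:ℝ)+c)/(2*(r:ℝ)+1))) atTop (𝓝 1) := by
  have h0 : Tendsto (fun r : ℕ => (c-1)/(2*(r:ℝ)+1)) atTop (𝓝 0) :=
    Tendsto.div_atTop tendsto_const_nhds tendsto_two_mul_add_one
  have heq : ∀ r : ℕ, (2*(r:ℝ)+c)/(2*(r:ℝ)+1) = 1 + (c-1)/(2*(r:ℝ)+1) := by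
    intro r
    have h1 : (2*(r:ℝ)+1) ≠ 0 := by positivity
    field_simp
    ring
  simp only [heq]
  simpa using tendsto_const_nhds.add h0

lemma nat_div_ratio_lim {d : ℕ} (hd : 0 < d) :
    Tendsto (fun r : ℕ => (2*((r/d : ℕ):ℝ)+1)/(2*(r:ℝ)+1)) atTop (𝓝 (1/(d:ℝ))) := by
  have hdR : (0:ℝ) < (d:ℝ) := by exact_mod_cast hd
  have hlow : Tendsto (fun r : ℕ => (1/(d:ℝ)) * ((2*(r:ℝ)+(-(d:ℝ)))/(2*(r:ℝ)+1)))
      atTop (𝓝 (1/(d:ℝ))) := by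
    simpa using (ratio_lim (-(d:ℝ))).const_mul (1/(d:ℝ))
  have hhigh : Tendsto (fun r : ℕ => (1/(d:ℝ)) * ((2*(r:ℝ)+(d:ℝ))/(2*(r:ℝ)+1)))
      atTop (𝓝 (1/(d:ℝ))) := by
    simpa using (ratio_lim ((d:ℝ))).const_mul (1/(d:ℝ))
  refine tendsto_of_tendsto_of_tendsto_of_le_of_le hlow hhigh ?_ ?_
  · intro r
    dsimp only
    have hmod : (d:ℝ)*((r/d:ℕ):ℝ) + ((r % d:ℕ):ℝ) = (r:ℝ) := by
      exact_mod_cast Nat.div_add_mod r d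
    have hlt : ((r % d:ℕ):ℝ) < (d:ℝ) := by exact_mod_cast Nat.mod_lt r hd
    have e1 : 1/(d:ℝ) * ((2*(r:ℝ)+(-(d:ℝ)))/(2*(r:ℝ)+1))
        = ((2*(r:ℝ)+(-(d:ℝ)))/(d:ℝ))/(2*(r:ℝ)+1) := by
      field_simp
    rw [e1]
    gcongr
    rw [div_le_iff₀ hdR]
    nlinarith
  · intro r
    dsimp only
    have h1 : ((r/d : ℕ):ℝ) * d ≤ (r:ℝ) := by exact_mod_cast Nat.div_mul_le_self r d
    have e2 : 1/(d:ℝ) * ((2*(r:ℝ)+(d:ℝ))/(2*(r:ℝ)+1))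
        = ((2*(r:ℝ)+(d:ℝ))/(d:ℝ))/(2*(r:ℝ)+1) := by
      field_simp
    rw [e2]
    gcongr
    · rw [le_div_iff₀ hdR]
      nlinarith

open ArithmeticFunction

noncomputable def Adens (k r : ℕ) : ℝ :=
  (((boxZ k r).filter (fun v => Finset.univ.gcd v = (1:ℤ))).card : ℝ) / (2*(r:ℝ)+1)^k

noncomputable def gMu (k : ℕ) : ℕ → ℝ := fun d => ((μ d : ℤ) : ℝ) / (d:ℝ)^k

noncomputable def fDen (k r : ℕ) : ℕ → ℝ := fun d =>
  if 1 ≤ d ∧ d ≤ r then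
    ((μ d : ℤ) : ℝ) * ((2*((r/d:ℕ):ℝ)+1)^k - 1)/(2*(r:ℝ)+1)^k
  else 0

lemma tsum_fDen (k r : ℕ) : ∑' d, fDen k r d = Adens k r := by
  rw [tsum_eq_sum (s := Finset.Icc 1 r) (by
    intro d hd
    rw [Finset.mem_Icc] at hd
    simp only [fDen, if_neg hd])]
  have hcast : (((boxZ k r).filter (fun v => Finset.univ.gcd v = (1:ℤ))).card : ℝ) =
      ∑ d ∈ Finset.Icc 1 r, ((μ d : ℤ):ℝ) * ((2*((r/d:ℕ):ℝ)+1)^k - 1) := by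
    have := moebius_count k r
    have h2 : (((((boxZ k r).filter (fun v => Finset.univ.gcd v = (1:ℤ))).card : ℤ)) : ℝ)
        = ((∑ d ∈ Finset.Icc 1 r, μ d * ((2*((r:ℕ)/d)+1)^k - 1) : ℤ) : ℝ) := by
      exact_mod_cast congrArg (fun z : ℤ => (z : ℝ)) this
    push_cast at h2 ⊢
    convert h2 using 1
    simp only [← Int.natCast_div, Int.cast_natCast]
  rw [Adens, hcast, Finset.sum_div]
  refine Finset.sum_congr rfl fun d hd => ?_
  rw [Finset.mem_Icc] at hd
  simp only [fDen, if_pos hd]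

lemma fDen_tendsto (k : ℕ) (hk : 1 ≤ k) (d : ℕ) :
    Tendsto (fun r => fDen k r d) atTop (𝓝 (gMu k d)) := by
  rcases Nat.eq_zero_or_pos d with rfl | hd
  · have : (fun r => fDen k r 0) = fun _ => 0 := by
      funext r; simp [fDen]
    rw [this]
    have : gMu k 0 = 0 := by simp [gMu]
    rw [this]
    exact tendsto_const_nhds
  · have hu : Tendsto (fun r : ℕ => 1/(2*(r:ℝ)+1)) atTop (𝓝 0) :=
      Tendsto.div_atTop tendsto_const_nhds tendsto_two_mul_add_one
    have hlim := (((nat_div_ratio_lim hd).pow k).sub (hu.pow k)).const_mul ((μ d : ℤ):ℝ)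
    have hval : ((μ d : ℤ):ℝ) * ((1/(d:ℝ))^k - (0:ℝ)^k) = gMu k d := by
      rw [zero_pow (by omega), sub_zero, one_div, inv_pow, gMu, div_eq_mul_inv]
    rw [hval] at hlim
    refine hlim.congr' ?_
    filter_upwards [eventually_ge_atTop d] with r hr
    rw [fDen, if_pos ⟨hd, hr⟩, div_pow, div_pow, one_pow, ← sub_div, mul_div_assoc]

lemma fDen_bound (k r : ℕ) (hk : 1 ≤ k) (d : ℕ) :
    ‖fDen k r d‖ ≤ (3/2:ℝ)^k * (1/(d:ℝ)^k) := by
  have hnn : (0:ℝ) ≤ (3/2:ℝ)^k * (1/(d:ℝ)^k) := by positivity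
  rw [Real.norm_eq_abs]
  rcases em (1 ≤ d ∧ d ≤ r) with ⟨hd, hr⟩ | hcond
  swap
  · simp only [fDen, if_neg hcond, abs_zero]; exact hnn
  have hr1 : 1 ≤ r := hd.trans hr
  simp only [fDen]
  rw [if_pos (show 1 ≤ d ∧ d ≤ r from ⟨hd, hr⟩)]
  have hdR : (0:ℝ) < (d:ℝ) := by exact_mod_cast hd
  have hrR : (0:ℝ) < (r:ℝ) := by exact_mod_cast hr1
  set X : ℝ := 2*((r/d:ℕ):ℝ)+1 with hX
  have hX1 : (1:ℝ) ≤ X := by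
    have : (0:ℝ) ≤ ((r/d:ℕ):ℝ) := Nat.cast_nonneg _
    rw [hX]; linarith
  have hXle : X ≤ 3*((r:ℝ)/(d:ℝ)) := by
    have h1 : ((r/d:ℕ):ℝ) ≤ (r:ℝ)/(d:ℝ) := Nat.cast_div_le
    have h2 : (1:ℝ) ≤ (r:ℝ)/(d:ℝ) := by
      rw [le_div_iff₀ hdR]; exact_mod_cast by simpa using hr
    rw [hX]; linarith
  set D : ℝ := 2*(r:ℝ)+1 with hD
  have hDpos : (0:ℝ) < D := by rw [hD]; positivity
  have hD2r : 2*(r:ℝ) ≤ D := by rw [hD]; linarith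
  have hmu : |((μ d : ℤ):ℝ)| ≤ 1 := by
    have := abs_moebius_le_one (n := d)
    exact_mod_cast this
  have hXk1 : (1:ℝ) ≤ X^k := one_le_pow₀ hX1
  have habs1 : |X^k - 1| ≤ X^k := by
    rw [abs_of_nonneg (by linarith)]; linarith
  have hDk : |D^k| = D^k := abs_of_pos (by positivity)
  rw [abs_div, abs_mul, hDk]
  have step1 : |((μ d:ℤ):ℝ)| * |X^k - 1| / D^k ≤ X^k / D^k := by
    gcongr
    calc |((μ d:ℤ):ℝ)| * |X^k - 1| ≤ 1 * (X^k) :=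
          mul_le_mul hmu habs1 (abs_nonneg _) zero_le_one
      _ = X^k := one_mul _
  have h3 : X/D ≤ (3/2) * (1/(d:ℝ)) := by
    have hstep : X/D ≤ (3*((r:ℝ)/(d:ℝ)))/(2*(r:ℝ)) := by
      apply div_le_div₀ (by positivity) hXle (by positivity) hD2r
    have heq : (3*((r:ℝ)/(d:ℝ)))/(2*(r:ℝ)) = (3/2)*(1/(d:ℝ)) := by
      field_simp
    linarith [heq ▸ hstep]
  have step3 : (X/D)^k ≤ ((3/2)*(1/(d:ℝ)))^k :=
    pow_le_pow_left₀ (by positivity) h3 k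
  have heq2 : ((3/2)*(1/(d:ℝ)))^k = (3/2:ℝ)^k * (1/(d:ℝ)^k) := by
    rw [mul_pow, one_div, one_div, inv_pow]
  calc |((μ d:ℤ):ℝ)| * |X^k - 1| / D^k ≤ X^k / D^k := step1
    _ = (X/D)^k := (div_pow X D k).symm
    _ ≤ ((3/2)*(1/(d:ℝ)))^k := step3
    _ = (3/2:ℝ)^k * (1/(d:ℝ)^k) := heq2

lemma summable_bnd (k : ℕ) (hk : 2 ≤ k) :
    Summable (fun d : ℕ => (3/2:ℝ)^k * (1/(d:ℝ)^k)) :=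
  (Real.summable_one_div_nat_pow.mpr hk).mul_left _

lemma Adens_tendsto (k : ℕ) (hk : 2 ≤ k) :
    Tendsto (Adens k) atTop (𝓝 (∑' d, gMu k d)) := by
  have := tendsto_tsum_of_dominated_convergence (f := fun r d => fDen k r d)
    (g := gMu k) (𝓕 := atTop) (summable_bnd k hk)
    (fun d => fDen_tendsto k (by omega) d)
    (Filter.Eventually.of_forall fun r => fDen_bound k r (by omega))
  refine this.congr fun r => tsum_fDen k r

lemma zetaR_summable (k : ℕ) (hk : 2 ≤ k) : Summable (fun n : ℕ => 1 / ((n:ℝ)+1)^k) := by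
  have h := Real.summable_one_div_nat_pow.mpr hk
  have h2 := (summable_nat_add_iff (f := fun n : ℕ => 1 / (n:ℝ)^k) 1).mpr h
  refine h2.congr fun n => ?_
  push_cast
  ring

lemma one_le_zetaR (k : ℕ) (hk : 2 ≤ k) : 1 ≤ zetaR k := by
  have hs := zetaR_summable k hk
  have h := Summable.le_tsum hs 0 (fun j _ => by positivity)
  simpa [zetaR] using h

open scoped LSeries.notation in
open Complex in
lemma tsum_gMu_eq (k : ℕ) (hk : 2 ≤ k) : ∑' d, gMu k d = 1 / zetaR k := by
  have hre : 1 < ((k:ℂ)).re := by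
    rw [natCast_re]
    exact_mod_cast hk.trans_lt' one_lt_two
  have hζsum : LSeriesSummable (ζ ·) (k:ℂ) :=
    ArithmeticFunction.LSeriesSummable_zeta_iff.mpr hre
  have hζ : LSeries ↗ζ (k:ℂ) = ((zetaR k : ℝ) : ℂ) := by
    rw [LSeries, Summable.tsum_eq_zero_add hζsum, LSeries.term_zero, zero_add, zetaR, ofReal_tsum]
    refine tsum_congr fun n => ?_
    rw [LSeries.term_of_ne_zero (Nat.succ_ne_zero n)]
    have : ((n+1 : ℕ):ℂ) ^ ((k:ℂ)) = ((n+1:ℕ):ℂ)^k := Complex.cpow_natCast _ k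
    rw [this]
    push_cast
    simp
  have hμ : LSeries ↗μ (k:ℂ) = (((∑' d, gMu k d) : ℝ) : ℂ) := by
    rw [LSeries, ofReal_tsum]
    refine tsum_congr fun n => ?_
    rcases Nat.eq_zero_or_pos n with rfl | hn
    · simp [LSeries.term_zero, gMu]
    · rw [LSeries.term_of_ne_zero hn.ne']
      have : ((n : ℕ):ℂ) ^ ((k:ℂ)) = ((n:ℕ):ℂ)^k := Complex.cpow_natCast _ k
      rw [this, gMu]
      push_cast
      ring
  have hzmu := ArithmeticFunction.LSeries_zeta_mul_Lseries_moebius (s := (k:ℂ)) hre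
  rw [hζ, hμ] at hzmu
  have hreal : zetaR k * (∑' d, gMu k d) = 1 := by
    exact_mod_cast hzmu
  have hz0 : zetaR k ≠ 0 := by
    have := one_le_zetaR k hk; linarith
  field_simp
  linarith [hreal]

lemma Adens_nonneg (k m : ℕ) : 0 ≤ Adens k m := by
  rw [Adens]; positivity

lemma Adens_le_one (k m : ℕ) : Adens k m ≤ 1 := by
  rw [Adens, div_le_one (by positivity)]
  have h := Finset.card_filter_le (boxZ k m) (fun v => Finset.univ.gcd v = (1:ℤ))
  calc (((boxZ k m).filter (fun v => Finset.univ.gcd v = (1:ℤ))).card : ℝ)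
      ≤ ((boxZ k m).card : ℝ) := by exact_mod_cast h
    _ = (2*(m:ℝ)+1)^k := by rw [card_boxZ]; push_cast; ring

lemma pow_sub_one_abs (k : ℕ) {t : ℝ} (ht : |t| ≤ 3/2) :
    |t^k - 1| ≤ (k:ℝ) * (3/2)^(k-1) * |t - 1| := by
  have hgs := geom_sum₂_mul t 1 k
  rw [one_pow] at hgs
  rw [← hgs, abs_mul]
  have hsum : |∑ i ∈ Finset.range k, t^i * 1^(k-1-i)| ≤ (k:ℝ) * (3/2)^(k-1) := by
    refine (Finset.abs_sum_le_sum_abs _ _).trans ?_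
    have : ∀ i ∈ Finset.range k, |t^i * 1^(k-1-i)| ≤ (3/2:ℝ)^(k-1) := by
      intro i hi
      rw [Finset.mem_range] at hi
      rw [one_pow, mul_one, abs_pow]
      calc |t|^i ≤ (3/2:ℝ)^i := pow_le_pow_left₀ (abs_nonneg t) ht i
        _ ≤ (3/2:ℝ)^(k-1) := pow_le_pow_right₀ (by norm_num) (by omega)
    refine (Finset.sum_le_sum this).trans ?_
    rw [Finset.sum_const, Finset.card_range, nsmul_eq_mul]
  exact mul_le_mul_of_nonneg_right hsum (abs_nonneg _)


set_option maxHeartbeats 1000000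

/-- for `k ≥ 2`, uniform convergence of densities of γ-primitive
elements: for every `ε > 0` there is `r(ε)` with
`|ρ_r(P_{k,γ}) − 1/(γ^k ζ(k))| ≤ ε/γ^{k−1}` for all `r ≥ r(ε)` and `1 ≤ γ ≤ r`. -/
theorem stmt6 (k : ℕ) (hk : 2 ≤ k) :
    ∀ ε : ℝ, 0 < ε → ∃ R : ℕ, ∀ r : ℕ, R ≤ r → ∀ γ : ℕ, 1 ≤ γ → γ ≤ r →
      |rhoZ k {v | Finset.univ.gcd v = (γ : ℤ)} r - 1 / ((γ : ℝ) ^ k * zetaR k)| ≤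
        ε / (γ : ℝ) ^ (k - 1) := by
  classical
  intro ε hε
  have hζ1 := one_le_zetaR k hk
  have hζpos : (0:ℝ) < zetaR k := lt_of_lt_of_le one_pos hζ1
  have hA := Adens_tendsto k hk
  rw [tsum_gMu_eq k hk] at hA
  set c : ℝ := (3/2:ℝ)^k with hc
  have hcpos : (0:ℝ) < c := by positivity
  obtain ⟨M, hM⟩ := Metric.tendsto_atTop.mp hA (ε/(3*c)) (by positivity)
  obtain ⟨R, hRge⟩ := exists_nat_ge (max (3*(k:ℝ)*(3/2)^(k-1)/ε) (6*c*(M:ℝ)/ε))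
  refine ⟨R, fun r hr γ hγ hγr => ?_⟩
  have hγpos : 0 < γ := hγ
  have hγR : (0:ℝ) < (γ:ℝ) := by exact_mod_cast hγpos
  have hrpos : 0 < r := lt_of_lt_of_le hγpos hγr
  have hrR : (0:ℝ) < (r:ℝ) := by exact_mod_cast hrpos
  have hrge : (R:ℝ) ≤ (r:ℝ) := by exact_mod_cast hr
  have hγrR : (γ:ℝ) ≤ (r:ℝ) := by exact_mod_cast hγr
  set m : ℕ := r / γ with hm
  -- the rhoZ value
  have hrho : rhoZ k {v | Finset.univ.gcd v = (γ:ℤ)} r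
      = (((boxZ k m).filter (fun w => Finset.univ.gcd w = (1:ℤ))).card : ℝ)
        / (2*(r:ℝ)+1)^k := by
    rw [rhoZ]
    congr 1
    have h1 : Nat.card {v : Fin k → ℤ // (∀ i, |v i| ≤ (r : ℤ)) ∧
        v ∈ {v : Fin k → ℤ | Finset.univ.gcd v = (γ:ℤ)}} =
        ((boxZ k r).filter (· ∈ {v : Fin k → ℤ | Finset.univ.gcd v = (γ:ℤ)})).card :=
      natCard_eq_filter k r _
    rw [h1]
    have h2 : ((boxZ k r).filter (· ∈ {v : Fin k → ℤ | Finset.univ.gcd v = (γ:ℤ)})) =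
        ((boxZ k r).filter (fun v => Finset.univ.gcd v = (γ:ℤ))) := by
      apply Finset.filter_congr
      intro v _
      simp [Set.mem_setOf_eq]
    rw [h2, filter_gcd_eq_image hγpos,
      Finset.card_image_of_injective _ (smul_injective hγpos)]
  -- basic inequalities about m
  have hm1 : 1 ≤ m := by
    rw [hm]
    exact (Nat.one_le_div_iff hγpos).mpr hγr
  have hmul_le : (γ:ℝ) * (m:ℝ) ≤ (r:ℝ) := by
    exact_mod_cast Nat.mul_comm γ m ▸ (by exact_mod_cast Nat.div_mul_le_self r γ : ((r/γ)*γ:ℕ) ≤ r)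
  have hmul_gt : (r:ℝ) < (γ:ℝ) * (m:ℝ) + (γ:ℝ) := by
    have hmod : (γ:ℝ)*((r/γ:ℕ):ℝ) + ((r % γ:ℕ):ℝ) = (r:ℝ) := by
      exact_mod_cast Nat.div_add_mod r γ
    have hlt : ((r % γ:ℕ):ℝ) < (γ:ℝ) := by exact_mod_cast Nat.mod_lt r hγpos
    rw [hm]
    push_cast
    nlinarith
  set A : ℝ := Adens k m with hA'
  set D : ℝ := 2*(r:ℝ)+1 with hD
  have hDpos : (0:ℝ) < D := by rw [hD]; positivity
  set t : ℝ := (γ:ℝ)*(2*(m:ℝ)+1)/D with htdef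
  set Q : ℝ := (2*(m:ℝ)+1)^k/D^k with hQdef
  have hAQ : rhoZ k {v | Finset.univ.gcd v = (γ:ℤ)} r = A * Q := by
    rw [hrho, hA', hQdef, Adens]
    have hP : ((2*(m:ℝ)+1)^k) ≠ 0 := by positivity
    rw [hD]
    field_simp
  have hQt : Q = (1/(γ:ℝ)^k) * t^k := by
    rw [hQdef, htdef]
    rw [div_pow, mul_pow]
    field_simp
  have hγ1R : (1:ℝ) ≤ (γ:ℝ) := by exact_mod_cast hγ
  have hmod : (γ:ℝ)*((r/γ:ℕ):ℝ) + ((r % γ:ℕ):ℝ) = (r:ℝ) := by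
    exact_mod_cast Nat.div_add_mod r γ
  have hmodle : ((r % γ:ℕ):ℝ) ≤ (γ:ℝ) - 1 := by
    have : r % γ ≤ γ - 1 := by
      have := Nat.mod_lt r hγpos
      omega
    have h2 : ((r % γ:ℕ):ℝ) ≤ ((γ - 1:ℕ):ℝ) := by exact_mod_cast this
    have h3 : ((γ - 1:ℕ):ℝ) = (γ:ℝ) - 1 := by
      have : (1:ℕ) ≤ γ := hγ
      push_cast [Nat.cast_sub this]
      ring
    linarith [h3 ▸ h2]
  have hmul_ge1 : (r:ℝ) + 1 ≤ (γ:ℝ)*(m:ℝ) + (γ:ℝ) := by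
    rw [hm]; linarith [hmod, hmodle]
  have ht1 : |t - 1| ≤ (γ:ℝ)/D := by
    have hnum : t - 1 = ((γ:ℝ)*(2*(m:ℝ)+1) - D)/D := by
      rw [htdef]; field_simp
    rw [hnum, abs_div, abs_of_pos hDpos]
    gcongr
    rw [abs_le]
    have hexp : (γ:ℝ)*(2*(m:ℝ)+1) = 2*((γ:ℝ)*(m:ℝ)) + (γ:ℝ) := by ring
    constructor
    · rw [hD]; linarith [hmul_ge1, hexp]
    · rw [hD]; linarith [hmul_le, hexp]
  have hγD : (γ:ℝ)/D ≤ 1/2 := by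
    rw [div_le_iff₀ hDpos, hD]
    linarith [hγrR]
  have htle : |t| ≤ 3/2 := by
    have h1 : |t| ≤ |t - 1| + 1 := by
      calc |t| = |(t-1) + 1| := by ring_nf
        _ ≤ |t-1| + |(1:ℝ)| := abs_add_le _ _
        _ = |t-1| + 1 := by rw [abs_one]
    linarith [ht1, hγD]
  have htk : |t^k - 1| ≤ (k:ℝ)*(3/2)^(k-1)*((γ:ℝ)/D) := by
    refine (pow_sub_one_abs k htle).trans ?_
    gcongr
  have hγk : (γ:ℝ)^k = (γ:ℝ)^(k-1)*(γ:ℝ) := by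
    rw [← pow_succ]
    congr 1
    omega
  have hγkpos : (0:ℝ) < (γ:ℝ)^k := by positivity
  have hγk1pos : (0:ℝ) < (γ:ℝ)^(k-1) := by positivity
  have hQsub : |Q - 1/(γ:ℝ)^k| ≤ ((k:ℝ)*(3/2)^(k-1)/D)/((γ:ℝ)^(k-1)) := by
    rw [hQt]
    have heq : 1/(γ:ℝ)^k * t^k - 1/(γ:ℝ)^k = (1/(γ:ℝ)^k)*(t^k - 1) := by ring
    rw [heq, abs_mul, abs_of_pos (by positivity : (0:ℝ) < 1/(γ:ℝ)^k)]
    calc 1/(γ:ℝ)^k * |t^k - 1| ≤ 1/(γ:ℝ)^k * ((k:ℝ)*(3/2)^(k-1)*((γ:ℝ)/D)) := by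
          gcongr
      _ = ((k:ℝ)*(3/2)^(k-1)/D)/((γ:ℝ)^(k-1)) := by
          rw [hγk]; field_simp
  have ht0 : (0:ℝ) ≤ t := by rw [htdef]; positivity
  have hQle : Q ≤ c/(γ:ℝ)^k := by
    rw [hQt, hc]
    have h1 : t^k ≤ (3/2:ℝ)^k := by
      apply pow_le_pow_left₀ ht0
      calc t ≤ |t| := le_abs_self t
        _ ≤ 3/2 := htle
    calc 1/(γ:ℝ)^k * t^k ≤ 1/(γ:ℝ)^k * (3/2:ℝ)^k := by gcongr
      _ = (3/2:ℝ)^k/(γ:ℝ)^k := by ring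
  have hQ0 : (0:ℝ) ≤ Q := by rw [hQdef]; positivity
  have hζne : zetaR k ≠ 0 := ne_of_gt hζpos
  have hdecomp : A*Q - 1/((γ:ℝ)^k * zetaR k)
      = Q*(A - 1/zetaR k) + (1/zetaR k)*(Q - 1/(γ:ℝ)^k) := by
    field_simp
    ring
  have habs : |A*Q - 1/((γ:ℝ)^k*zetaR k)| ≤ Q*|A - 1/zetaR k| + |Q - 1/(γ:ℝ)^k| := by
    rw [hdecomp]
    calc |Q*(A - 1/zetaR k) + (1/zetaR k)*(Q - 1/(γ:ℝ)^k)|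
        ≤ |Q*(A - 1/zetaR k)| + |(1/zetaR k)*(Q - 1/(γ:ℝ)^k)| := abs_add_le _ _
      _ = Q*|A - 1/zetaR k| + (1/zetaR k)*|Q - 1/(γ:ℝ)^k| := by
          rw [abs_mul, abs_mul, abs_of_nonneg hQ0,
            abs_of_pos (by positivity : (0:ℝ) < 1/zetaR k)]
      _ ≤ Q*|A - 1/zetaR k| + 1*|Q - 1/(γ:ℝ)^k| :=
          add_le_add le_rfl (mul_le_mul_of_nonneg_right
            (by rw [div_le_one hζpos]; exact hζ1) (abs_nonneg _))
      _ = Q*|A - 1/zetaR k| + |Q - 1/(γ:ℝ)^k| := by rw [one_mul]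
  -- requirement 1
  have hreq1 : (k:ℝ)*(3/2)^(k-1)/D ≤ ε/3 := by
    have h1 : 3*(k:ℝ)*(3/2)^(k-1)/ε ≤ (r:ℝ) :=
      le_trans (le_trans (le_max_left _ _) hRge) hrge
    rw [div_le_iff₀ hε] at h1
    rw [div_le_iff₀ hDpos, hD]
    have hexp2 : ε/3*(2*(r:ℝ)+1) = 2/3*((r:ℝ)*ε) + ε/3 := by ring
    linarith [h1, hexp2, hε.le, mul_nonneg (le_of_lt hrR) hε.le]
  have hT2 : |Q - 1/(γ:ℝ)^k| ≤ (ε/3)/(γ:ℝ)^(k-1) := by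
    refine hQsub.trans ?_
    gcongr
  -- requirement 2 / case split for T1
  have hT1 : Q*|A - 1/zetaR k| ≤ (ε/3)/(γ:ℝ)^(k-1) := by
    rcases le_or_gt (M*γ) r with hcase | hcase
    · -- m ≥ M
      have hmM : M ≤ m := by
        rw [hm]
        exact (Nat.le_div_iff_mul_le hγpos).mpr hcase
      have hAd := hM m hmM
      rw [Real.dist_eq] at hAd
      calc Q*|A - 1/zetaR k| ≤ (c/(γ:ℝ)^k)*(ε/(3*c)) :=
            mul_le_mul hQle hAd.le (abs_nonneg _) (by positivity)
        _ = (ε/3)/(γ:ℝ)^k := by field_simp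
        _ ≤ (ε/3)/(γ:ℝ)^(k-1) := by
            gcongr
            · exact Nat.sub_le k 1
    · -- γ is large
      have hM1 : 0 < M := by
        rcases Nat.eq_zero_or_pos M with rfl | h
        · simp at hcase
        · exact h
      have hM1R : (1:ℝ) ≤ (M:ℝ) := by exact_mod_cast hM1
      have hrM : (r:ℝ) < (M:ℝ)*(γ:ℝ) := by exact_mod_cast hcase
      have h6 : 6*c*(M:ℝ)/ε ≤ (r:ℝ) :=
        le_trans (le_trans (le_max_right _ _) hRge) hrge
      rw [div_le_iff₀ hε] at h6
      have hγbig : 6*c < (γ:ℝ)*ε := by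
        by_contra hcon
        push_neg at hcon
        have h7 : (M:ℝ)*((γ:ℝ)*ε) ≤ (M:ℝ)*(6*c) :=
          mul_le_mul_of_nonneg_left hcon (by positivity)
        have h8 : (r:ℝ)*ε < (M:ℝ)*(γ:ℝ)*ε := mul_lt_mul_of_pos_right hrM hε
        linarith [h6, h7, h8]
      have hA2 : |A - 1/zetaR k| ≤ 2 := by
        have h1 : |A - 1/zetaR k| ≤ |A| + |1/zetaR k| := abs_sub _ _
        have h2 : |A| ≤ 1 := by
          rw [abs_of_nonneg (hA' ▸ Adens_nonneg k m)]
          exact hA' ▸ Adens_le_one k m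
        have h3 : |1/zetaR k| ≤ 1 := by
          rw [abs_of_pos (by positivity : (0:ℝ) < 1/zetaR k), div_le_one hζpos]
          exact hζ1
        linarith
      calc Q*|A - 1/zetaR k| ≤ (c/(γ:ℝ)^k)*2 :=
            mul_le_mul hQle hA2 (abs_nonneg _) (by positivity)
        _ = (2*c/(γ:ℝ))/(γ:ℝ)^(k-1) := by rw [hγk]; field_simp
        _ ≤ (ε/3)/(γ:ℝ)^(k-1) := by
            have hnum : 2*c/(γ:ℝ) ≤ ε/3 := by
              rw [div_le_iff₀ hγR]
              linarith [hγbig]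
            exact (div_le_div_iff_of_pos_right hγk1pos).mpr hnum
  calc |rhoZ k {v | Finset.univ.gcd v = (γ:ℤ)} r - 1/((γ:ℝ)^k * zetaR k)|
      = |A*Q - 1/((γ:ℝ)^k * zetaR k)| := by rw [hAQ]
    _ ≤ Q*|A - 1/zetaR k| + |Q - 1/(γ:ℝ)^k| := habs
    _ ≤ (ε/3)/(γ:ℝ)^(k-1) + (ε/3)/(γ:ℝ)^(k-1) := add_le_add hT1 hT2
    _ = (ε/3 + ε/3)/(γ:ℝ)^(k-1) := by rw [← add_div]
    _ ≤ ε/(γ:ℝ)^(k-1) := by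
        gcongr
        linarith
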